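/- arXiv:2207.05868 — 4 statements merged into one kernel-verified Lean document; each statement's English description precedes it below -/
import Mathlib

section
/- For every integer m ≥ 2 and every positive integer p divisible by m, consider the instance of scheduling on m identical machines whose conflict graph is the disjoint union of m cliques, each on m − 1 jobs of processing time p/m, together with one additional isolated job of processing time p. Then: (i) the optimal makespan over proper schedules equals p; (ii) there exists a proper schedule of all jobs except the isolated one under which every machine has load exactly p(m−1)/m; and (iii) every proper schedule of all jobs extending the partial schedule from (ii) has makespan exactly p(2 − 1/m). -/
/-- The job set of the hard instance: `m` cliques of `m - 1` jobs each,
plus one extra isolated job. -/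
abbrev HardJobs (m : ℕ) : Type := (Fin m × Fin (m - 1)) ⊕ Unit

/-- The conflict graph of the hard instance: two jobs are in conflict iff they
belong to the same clique (same first coordinate); the extra job is isolated. -/
def hardGraph (m : ℕ) : SimpleGraph (HardJobs m) :=
  SimpleGraph.fromRel (fun x y =>
    ∃ (a : Fin m) (b b' : Fin (m - 1)), x = Sum.inl (a, b) ∧ y = Sum.inl (a, b'))

/-- Processing times of the hard instance: `p / m` for the clique jobs and `p`
for the isolated job. -/
def hardTime (m p : ℕ) : HardJobs m → ℕ :=
  Sum.elim (fun _ => p / m) (fun _ => p)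

/-- For `m ≥ 2` machines and `p > 0` divisible by `m`: (i) the optimal makespan of the
hard instance is exactly `p`; (ii) there is a proper schedule `σ₀` of the clique jobs
giving every machine load exactly `(m-1)·p/m`; and (iii) every proper schedule of all
jobs extending `σ₀` has makespan exactly `2p - p/m = p(2 - 1/m)`. -/
theorem hard_instance_tightness (m p : ℕ) (hm : 2 ≤ m) (hp : 0 < p) (hdvd : m ∣ p) :
    -- (i) the optimal makespan equals p
    ((∃ σ : HardJobs m → Fin m,
        (∀ u v, (hardGraph m).Adj u v → σ u ≠ σ v) ∧
        (Finset.univ.sup fun i : Fin m =>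
          ∑ j ∈ Finset.univ.filter (fun j => σ j = i), hardTime m p j) = p) ∧
      (∀ σ : HardJobs m → Fin m, (∀ u v, (hardGraph m).Adj u v → σ u ≠ σ v) →
        p ≤ Finset.univ.sup fun i : Fin m =>
          ∑ j ∈ Finset.univ.filter (fun j => σ j = i), hardTime m p j)) ∧
    -- (ii) and (iii)
    (∃ σ₀ : Fin m × Fin (m - 1) → Fin m,
      (∀ x y : Fin m × Fin (m - 1),
        (hardGraph m).Adj (Sum.inl x) (Sum.inl y) → σ₀ x ≠ σ₀ y) ∧
      (∀ i : Fin m,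
        (∑ x ∈ Finset.univ.filter (fun x : Fin m × Fin (m - 1) => σ₀ x = i),
          hardTime m p (Sum.inl x)) = (m - 1) * (p / m)) ∧
      (∀ σ : HardJobs m → Fin m,
        (∀ u v, (hardGraph m).Adj u v → σ u ≠ σ v) →
        (∀ x, σ (Sum.inl x) = σ₀ x) →
        (Finset.univ.sup fun i : Fin m =>
          ∑ j ∈ Finset.univ.filter (fun j => σ j = i), hardTime m p j)
            = 2 * p - p / m)) := by
  obtain ⟨m', rfl⟩ : ∃ m', m = m' + 2 := ⟨m - 2, by omega⟩
  set q := p / (m' + 2) with hq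
  have hpm : (m' + 2) * q = p := Nat.mul_div_cancel' hdvd
  have hkey : (m' + 1) * q + q = p := by rw [← hpm]; ring
  constructor
  · constructor
    · -- optimal schedule achieving makespan p
      refine ⟨Sum.elim (fun x : Fin (m' + 2) × Fin (m' + 1) => (x.2).succ)
        (fun _ => (0 : Fin (m' + 2))), ?_, ?_⟩
      · intro u v huv
        rw [hardGraph, SimpleGraph.fromRel_adj] at huv
        obtain ⟨hne, h | h⟩ := huv
        · obtain ⟨a, b, b', rfl, rfl⟩ := h
          simp only [Sum.elim_inl]
          intro hc
          exact hne (by rw [Fin.succ_inj.mp hc])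
        · obtain ⟨a, b, b', rfl, rfl⟩ := h
          simp only [Sum.elim_inl]
          intro hc
          exact hne (by rw [Fin.succ_inj.mp hc.symm])
      · have hload : ∀ i : Fin (m' + 2),
            (∑ j ∈ Finset.univ.filter (fun j =>
              Sum.elim (fun x : Fin (m' + 2) × Fin (m' + 1) => (x.2).succ)
                (fun _ => (0 : Fin (m' + 2))) j = i), hardTime (m' + 2) p j) = p := by
          intro i
          rw [Finset.sum_filter, Fintype.sum_sum_type]
          simp only [Sum.elim_inl, Sum.elim_inr, hardTime]
          induction i using Fin.cases with
          | zero => simp [Fin.succ_ne_zero]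
          | succ j =>
            rw [Fintype.sum_prod_type]
            simp [Fin.succ_inj, (Fin.succ_ne_zero j).symm, Finset.sum_ite_eq',
              Finset.sum_const, hq.symm ▸ hpm]
        calc Finset.univ.sup (fun i : Fin (m' + 2) =>
              ∑ j ∈ Finset.univ.filter (fun j =>
                Sum.elim (fun x : Fin (m' + 2) × Fin (m' + 1) => (x.2).succ)
                  (fun _ => (0 : Fin (m' + 2))) j = i), hardTime (m' + 2) p j)
            = Finset.univ.sup (fun _ : Fin (m' + 2) => p) :=
              Finset.sup_congr rfl (fun i _ => hload i)
          _ = p := Finset.sup_const Finset.univ_nonempty p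
    · -- lower bound
      intro σ hσ
      have hmem : Sum.inr () ∈ Finset.univ.filter (fun j => σ j = σ (Sum.inr ())) := by
        simp
      have h1 : hardTime (m' + 2) p (Sum.inr ()) ≤
          ∑ j ∈ Finset.univ.filter (fun j => σ j = σ (Sum.inr ())),
            hardTime (m' + 2) p j :=
        Finset.single_le_sum (fun j _ => Nat.zero_le _) hmem
      exact h1.trans (Finset.le_sup (f := fun i : Fin (m' + 2) =>
        ∑ j ∈ Finset.univ.filter (fun j => σ j = i), hardTime (m' + 2) p j)
        (Finset.mem_univ _))
  · -- parts (ii) and (iii)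
    refine ⟨fun x : Fin (m' + 2) × Fin (m' + 1) => x.1 + (x.2).succ, ?_, ?_, ?_⟩
    · intro x y hxy
      rw [hardGraph, SimpleGraph.fromRel_adj] at hxy
      obtain ⟨hne, h | h⟩ := hxy
      · obtain ⟨a, b, b', hx, hy⟩ := h
        obtain rfl : x = (a, b) := Sum.inl.inj hx
        obtain rfl : y = (a, b') := Sum.inl.inj hy
        intro hc
        have hc' : a + (show Fin (m' + 1) from b).succ
            = a + (show Fin (m' + 1) from b').succ := hc
        have hb : (show Fin (m' + 1) from b) = (show Fin (m' + 1) from b') :=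
          Fin.succ_inj.mp (add_left_cancel hc')
        exact hne (by rw [show b = b' from hb])
      · obtain ⟨a, b, b', hy, hx⟩ := h
        obtain rfl : x = (a, b') := Sum.inl.inj hx
        obtain rfl : y = (a, b) := Sum.inl.inj hy
        intro hc
        have hc' : a + (show Fin (m' + 1) from b').succ
            = a + (show Fin (m' + 1) from b).succ := hc
        have hb : (show Fin (m' + 1) from b') = (show Fin (m' + 1) from b) :=
          Fin.succ_inj.mp (add_left_cancel hc')
        exact hne (by rw [show b' = b from hb])
    · intro i
      have : (∑ x ∈ Finset.univ.filter
            (fun x : Fin (m' + 2) × Fin (m' + 1) => x.1 + (x.2).succ = i),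
            hardTime (m' + 2) p (Sum.inl x)) = (m' + 1) * q := by
        rw [Finset.sum_filter, Fintype.sum_prod_type_right]
        simp only [hardTime, Sum.elim_inl]
        have hinner : ∀ b : Fin (m' + 1),
            (∑ a : Fin (m' + 2), if a + b.succ = i then q else 0) = q := by
          intro b
          simp [← eq_sub_iff_add_eq, Finset.sum_ite_eq']
        simp [← hq, hinner, Finset.sum_const, mul_comm]
      simpa using this
    · intro σ hσ hext
      have hload : ∀ k : Fin (m' + 2),
          (∑ j ∈ Finset.univ.filter (fun j => σ j = k), hardTime (m' + 2) p j)
            = (m' + 1) * q + (if σ (Sum.inr ()) = k then p else 0) := by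
        intro k
        rw [Finset.sum_filter, Fintype.sum_sum_type]
        congr 1
        · rw [Fintype.sum_prod_type_right]
          simp only [hardTime, Sum.elim_inl, hext]
          have hinner : ∀ b : Fin (m' + 1),
              (∑ a : Fin (m' + 2), if (a, b).1 + ((a, b).2).succ = k then q else 0) = q := by
            intro b
            simp [← eq_sub_iff_add_eq, Finset.sum_ite_eq']
          simp [← hq, hinner, Finset.sum_const, mul_comm]
      apply le_antisymm
      · apply Finset.sup_le
        intro k _
        rw [hload k]
        split <;> omega
      · have h := Finset.le_sup (f := fun k : Fin (m' + 2) =>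
          ∑ j ∈ Finset.univ.filter (fun j => σ j = k), hardTime (m' + 2) p j)
          (Finset.mem_univ (σ (Sum.inr ())))
        calc 2 * p - q
            = (m' + 1) * q + (if σ (Sum.inr ()) = σ (Sum.inr ()) then p else 0) := by
              rw [if_pos rfl]; omega
          _ = ∑ j ∈ Finset.univ.filter (fun j => σ j = σ (Sum.inr ())),
              hardTime (m' + 2) p j := (hload _).symm
          _ ≤ _ := h
end

section
/- Let G be a block graph with n ≥ 1 vertices and clique number ω(G) ≤ m, where m ≥ 2, and write n = d(m−1) + r with integers d ≥ 0 and 0 ≤ r ≤ m−2. Then G has a proper m-coloring in which every color class has at most ⌈n/(m−1)⌉ vertices; moreover, if r = 0 then at least one color class has strictly fewer than ⌈n/(m−1)⌉ vertices, and if r > 0 then at least m − r color classes have strictly fewer than ⌈n/(m−1)⌉ vertices. -/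
/-- `Bs` is a list of cliques (blocks) witnessing that `G` is a block graph:
the cliques cover all vertices and all edges, and each clique shares at most
one vertex with the union of the preceding ones. -/
def IsBlockGraphCover {V : Type*} (G : SimpleGraph V) (Bs : List (Finset V)) : Prop :=
  (∀ B ∈ Bs, G.IsClique (B : Set V)) ∧
  (∀ v : V, ∃ B ∈ Bs, v ∈ B) ∧
  (∀ u v : V, G.Adj u v → ∃ B ∈ Bs, u ∈ B ∧ v ∈ B) ∧
  (∀ (i : ℕ) (hi : i < Bs.length), ∀ u ∈ Bs.get ⟨i, hi⟩, ∀ w ∈ Bs.get ⟨i, hi⟩,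
    (∃ (j : ℕ) (hj : j < i), u ∈ Bs.get ⟨j, hj.trans hi⟩) →
    (∃ (j : ℕ) (hj : j < i), w ∈ Bs.get ⟨j, hj.trans hi⟩) → u = w)

def IsBlockGraph {V : Type*} (G : SimpleGraph V) : Prop :=
  ∃ Bs : List (Finset V), IsBlockGraphCover G Bs

lemma exists_min_subset {α : Type*} [DecidableEq α] (ℓ : α → ℕ) :
    ∀ (s : ℕ) (A : Finset α), s ≤ A.card →
    ∃ S ⊆ A, S.card = s ∧ ∀ y ∈ S, ∀ x ∈ A, x ∉ S → ℓ y ≤ ℓ x := by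
  intro s
  induction s with
  | zero => exact fun A _ => ⟨∅, Finset.empty_subset _, Finset.card_empty, by simp⟩
  | succ s ih =>
    intro A hA
    obtain ⟨S, hSA, hScard, hmin⟩ := ih A (by omega)
    have hne : (A \ S).Nonempty := by
      rw [← Finset.card_pos, Finset.card_sdiff_of_subset hSA]; omega
    obtain ⟨y₀, hy₀, hy₀min⟩ := Finset.exists_min_image (A \ S) ℓ hne
    rw [Finset.mem_sdiff] at hy₀
    refine ⟨insert y₀ S, ?_, ?_, ?_⟩
    · exact Finset.insert_subset hy₀.1 hSA
    · rw [Finset.card_insert_of_notMem hy₀.2, hScard]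
    · intro y hy x hx hxS
      rcases Finset.mem_insert.mp hy with rfl | hyS
      · exact hy₀min x (Finset.mem_sdiff.mpr ⟨hx, fun h => hxS (Finset.mem_insert_of_mem h)⟩)
      · exact hmin y hyS x hx (fun h => hxS (Finset.mem_insert_of_mem h))

lemma step_lemma {m : ℕ} (hm : 2 ≤ m) (ℓ : Fin m → ℕ) (t : ℕ)
    (hinv : ∀ j, j < m →
      (Finset.univ.filter fun x => (t - j + m - 2) / (m - 1) < ℓ x).card ≤ j)
    (s : ℕ) (F : Finset (Fin m)) (hF : F.card ≤ 1) (hsF : s + F.card ≤ m) :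
    ∃ S : Finset (Fin m), S.card = s ∧ Disjoint S F ∧
      ∀ j, j < m → (Finset.univ.filter fun x =>
          (t + s - j + m - 2) / (m - 1) < ℓ x + (if x ∈ S then 1 else 0)).card ≤ j := by
  have hm1 : 0 < m - 1 := by omega
  have hAcard : (Finset.univ \ F).card = m - F.card := by
    rw [Finset.card_sdiff_of_subset (Finset.subset_univ F), Finset.card_univ, Fintype.card_fin]
  obtain ⟨S, hSA, hScard, hmin⟩ := exists_min_subset ℓ s (Finset.univ \ F) (by omega)
  have hSdisj : Disjoint S F := Finset.disjoint_left.mpr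
    (fun {x} hx => (Finset.mem_sdiff.mp (hSA hx)).2)
  refine ⟨S, hScard, hSdisj, ?_⟩
  intro j hj
  by_cases hjs : s ≤ j
  · -- easy case
    have hnum : t + s - j + m - 2 = t - (j - s) + m - 2 := by omega
    have hsub : (Finset.univ.filter fun x =>
        (t + s - j + m - 2) / (m - 1) < ℓ x + (if x ∈ S then 1 else 0)) ⊆
        (Finset.univ.filter fun x => (t - (j - s) + m - 2) / (m - 1) < ℓ x) ∪ S := by
      intro x hx
      rw [Finset.mem_filter] at hx
      by_cases hxS : x ∈ S
      · exact Finset.mem_union_right _ hxS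
      · refine Finset.mem_union_left _ (Finset.mem_filter.mpr ⟨Finset.mem_univ _, ?_⟩)
        simp only [hxS, if_false, add_zero] at hx
        rw [← hnum]; exact hx.2
    calc (Finset.univ.filter fun x =>
        (t + s - j + m - 2) / (m - 1) < ℓ x + (if x ∈ S then 1 else 0)).card
        ≤ ((Finset.univ.filter fun x => (t - (j - s) + m - 2) / (m - 1) < ℓ x) ∪ S).card :=
          Finset.card_le_card hsub
      _ ≤ (Finset.univ.filter fun x =>
            (t - (j - s) + m - 2) / (m - 1) < ℓ x).card + S.card := Finset.card_union_le _ _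
      _ ≤ (j - s) + s := add_le_add (hinv (j - s) (by omega)) (le_of_eq hScard)
      _ = j := by omega
  · -- hard case : j < s
    push_neg at hjs
    by_contra hcon
    push_neg at hcon
    set T := (t + s - j + m - 2) / (m - 1) with hT
    have hT1 : 1 ≤ T := by
      rw [hT, Nat.le_div_iff_mul_le hm1, one_mul]; omega
    -- all loads ≤ T
    have h0 : ∀ x, ℓ x ≤ T := by
      intro x
      by_contra hx
      have hmem : x ∈ Finset.univ.filter fun x => (t - 0 + m - 2) / (m - 1) < ℓ x := by
        refine Finset.mem_filter.mpr ⟨Finset.mem_univ _, ?_⟩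
        have h1 : (t - 0 + m - 2) / (m - 1) ≤ T := Nat.div_le_div_right (by omega)
        omega
      have := hinv 0 (by omega)
      have := Finset.card_pos.mpr ⟨x, hmem⟩
      omega
    -- members of the bad set lie in S and have load exactly T
    have hchar : ∀ x, x ∈ (Finset.univ.filter fun x =>
        T < ℓ x + (if x ∈ S then 1 else 0)) → x ∈ S ∧ ℓ x = T := by
      intro x hx
      rw [Finset.mem_filter] at hx
      by_cases hxS : x ∈ S
      · refine ⟨hxS, ?_⟩
        have := h0 x
        simp only [hxS, if_true] at hx
        omega
      · exfalso; have := h0 x; simp only [hxS, if_false, add_zero] at hx; omega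
    have hne : (Finset.univ.filter fun x =>
        T < ℓ x + (if x ∈ S then 1 else 0)).Nonempty := Finset.card_pos.mp (by omega)
    obtain ⟨y, hy⟩ := hne
    obtain ⟨hyS, hyT⟩ := hchar y hy
    set i0 := j + (m - s - F.card) with hi0
    have hKi : (t - i0 + m - 2) / (m - 1) < T := by
      rcases le_or_gt t i0 with h | h
      · have h1 : t - i0 = 0 := by omega
        rw [h1]
        have : (0 + m - 2) / (m - 1) = 0 := Nat.div_eq_of_lt (by omega)
        omega
      · have h2 : (t - i0 + m - 2) + (m - 1) ≤ t + s - j + m - 2 := by omega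
        have h3 : (t - i0 + m - 2) / (m - 1) + 1 = ((t - i0 + m - 2) + (m - 1)) / (m - 1) := by
          rw [Nat.add_div_right _ hm1]
        rw [hT]
        have h4 := Nat.div_le_div_right (c := m - 1) h2
        omega
    -- the big set of colors with load > K(t,i0)
    have hsub2 : (S.filter fun x => ℓ x = T) ∪ ((Finset.univ \ F) \ S) ⊆
        Finset.univ.filter fun x => (t - i0 + m - 2) / (m - 1) < ℓ x := by
      intro x hx
      refine Finset.mem_filter.mpr ⟨Finset.mem_univ _, ?_⟩
      rcases Finset.mem_union.mp hx with hx1 | hx2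
      · have := (Finset.mem_filter.mp hx1).2
        omega
      · rw [Finset.mem_sdiff] at hx2
        have h5 := hmin y hyS x hx2.1 hx2.2
        have := h0 x
        omega
    have hdisj2 : Disjoint (S.filter fun x => ℓ x = T) ((Finset.univ \ F) \ S) := by
      refine Finset.disjoint_left.mpr (fun {x} hx1 hx2 => ?_)
      exact (Finset.mem_sdiff.mp hx2).2 (Finset.mem_of_mem_filter _ hx1)
    have hcard1 : j + 1 ≤ (S.filter fun x => ℓ x = T).card := by
      refine le_trans hcon (Finset.card_le_card ?_)
      intro x hx
      obtain ⟨h1, h2⟩ := hchar x hx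
      exact Finset.mem_filter.mpr ⟨h1, h2⟩
    have hcard2 : ((Finset.univ \ F) \ S).card = m - F.card - s := by
      rw [Finset.card_sdiff_of_subset hSA, hAcard, hScard]
    have hbig := Finset.card_le_card hsub2
    rw [Finset.card_union_of_disjoint hdisj2, hcard2] at hbig
    have hfin := hinv i0 (by omega)
    omega

def Ublocks {V : Type*} [DecidableEq V] (Bs : List (Finset V)) (i : ℕ) : Finset V :=
  (Finset.range i).biUnion fun j => Bs.getD j ∅

lemma mem_Ublocks {V : Type*} [DecidableEq V] {Bs : List (Finset V)} {i : ℕ} {v : V} :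
    v ∈ Ublocks Bs i ↔ ∃ l, l < i ∧ v ∈ Bs.getD l ∅ := by
  simp [Ublocks, Finset.mem_biUnion, Finset.mem_range]

lemma div_aux1 (m d : ℕ) (hm : 2 ≤ m) : (d * (m - 1) + m - 2) / (m - 1) = d := by
  have h1 : d * (m - 1) + m - 2 = (m - 2) + d * (m - 1) := by
    rw [Nat.add_sub_assoc (by omega : 2 ≤ m), Nat.add_comm]
  rw [h1, Nat.add_mul_div_right _ _ (by omega : 0 < m - 1),
    Nat.div_eq_of_lt (by omega), Nat.zero_add]

lemma div_aux2 (m d r : ℕ) (hm : 2 ≤ m) (hr1 : 1 ≤ r) (hr2 : r ≤ m - 2) :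
    (d * (m - 1) + r + m - 2) / (m - 1) = d + 1 := by
  have h0 : d * (m - 1) + r + m = (r + m) + d * (m - 1) := by ring
  rw [h0, Nat.sub_add_comm (by omega : 2 ≤ r + m),
    Nat.add_mul_div_right _ _ (by omega : 0 < m - 1),
    Nat.div_eq_of_lt_le (by omega : 1 * (m - 1) ≤ r + m - 2)
      (by omega : r + m - 2 < (1 + 1) * (m - 1))]
  omega

lemma block_induction {V : Type*} [Fintype V] [DecidableEq V]
    (G : SimpleGraph V) (Bs : List (Finset V)) (hBG : IsBlockGraphCover G Bs)
    (m : ℕ) (hm : 2 ≤ m)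
    (hω : ∀ s : Finset V, G.IsClique (s : Set V) → s.card ≤ m) :
    ∀ i, i ≤ Bs.length → ∃ c : V → Fin m,
      (∀ u v, u ∈ Ublocks Bs i → v ∈ Ublocks Bs i → G.Adj u v → c u ≠ c v) ∧
      (∀ j, j < m → (Finset.univ.filter fun x : Fin m =>
          ((Ublocks Bs i).card - j + m - 2) / (m - 1) <
          ((Ublocks Bs i).filter fun v => c v = x).card).card ≤ j) := by
  obtain ⟨hclique, hcov, hedge, hsep⟩ := hBG
  have hgetD : ∀ (l : ℕ) (hl : l < Bs.length), Bs.getD l ∅ = Bs.get ⟨l, hl⟩ := by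
    intro l hl; rw [List.getD_eq_getElem _ _ hl, List.get_eq_getElem]
  -- edge localization
  have hloc : ∀ i, i ≤ Bs.length → ∀ u v, u ∈ Ublocks Bs i → v ∈ Ublocks Bs i → G.Adj u v →
      ∃ l, l < i ∧ u ∈ Bs.getD l ∅ ∧ v ∈ Bs.getD l ∅ := by
    intro i hi u v hu hv hadj
    obtain ⟨B', hB'mem, huB', hvB'⟩ := hedge u v hadj
    obtain ⟨⟨l₀, hl₀⟩, hB'⟩ := List.mem_iff_get.mp hB'mem
    obtain ⟨lu, hlu, hulu⟩ := mem_Ublocks.mp hu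
    obtain ⟨lv, hlv, hvlv⟩ := mem_Ublocks.mp hv
    by_cases hl₀i : l₀ < i
    · exact ⟨l₀, hl₀i, by rw [hgetD l₀ hl₀, hB']; exact huB',
        by rw [hgetD l₀ hl₀, hB']; exact hvB'⟩
    · exfalso
      push_neg at hl₀i
      have hlul : lu < Bs.length := lt_of_lt_of_le hlu hi
      have hlvl : lv < Bs.length := lt_of_lt_of_le hlv hi
      have huget : u ∈ Bs.get ⟨lu, hlul⟩ := by rw [← hgetD lu hlul]; exact hulu
      have hvget : v ∈ Bs.get ⟨lv, hlvl⟩ := by rw [← hgetD lv hlvl]; exact hvlv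
      have := hsep l₀ hl₀ u (hB' ▸ huB') v (hB' ▸ hvB')
        ⟨lu, lt_of_lt_of_le hlu hl₀i, huget⟩ ⟨lv, lt_of_lt_of_le hlv hl₀i, hvget⟩
      exact hadj.ne this
  intro i
  induction i with
  | zero =>
    intro _
    refine ⟨fun _ => ⟨0, by omega⟩, ?_, ?_⟩
    · intro u v hu; simp [Ublocks] at hu
    · intro j hj
      have h0 : Ublocks Bs 0 = ∅ := by simp [Ublocks]
      simp [h0]
  | succ i ih =>
    intro hi1
    have hiL : i < Bs.length := hi1
    obtain ⟨c, hprop, hinv⟩ := ih (le_of_lt hiL)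
    set B : Finset V := Bs.getD i ∅ with hB
    have hBmem : B ∈ Bs := by
      rw [hB, List.getD_eq_getElem _ _ hiL]; exact List.getElem_mem hiL
    have hBm : B.card ≤ m := hω B (hclique B hBmem)
    set N : Finset V := B \ Ublocks Bs i with hN
    set O : Finset V := B ∩ Ublocks Bs i with hO
    have hOcard : O.card ≤ 1 := by
      rw [Finset.card_le_one]
      intro u hu w hw
      rw [hO, Finset.mem_inter] at hu hw
      have huget : u ∈ Bs.get ⟨i, hiL⟩ := by rw [← hgetD i hiL]; exact hu.1
      have hwget : w ∈ Bs.get ⟨i, hiL⟩ := by rw [← hgetD i hiL]; exact hw.1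
      obtain ⟨lu, hlu, hulu⟩ := mem_Ublocks.mp hu.2
      obtain ⟨lw, hlw, hwlw⟩ := mem_Ublocks.mp hw.2
      refine hsep i hiL u huget w hwget ⟨lu, hlu, ?_⟩ ⟨lw, hlw, ?_⟩
      · rw [← hgetD lu (hlu.trans hiL)]; exact hulu
      · rw [← hgetD lw (hlw.trans hiL)]; exact hwlw
    have hdisjUN : Disjoint (Ublocks Bs i) N := by
      rw [hN]; exact Finset.sdiff_disjoint.symm
    have hNO : N.card + O.card = B.card := Finset.card_sdiff_add_card_inter B (Ublocks Bs i)
    set F : Finset (Fin m) := O.image c with hF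
    have hFcard : F.card ≤ 1 := le_trans (Finset.card_image_le) hOcard
    have hsF : N.card + F.card ≤ m := by
      have h := Finset.card_image_le (s := O) (f := c)
      rw [← hF] at h
      omega
    obtain ⟨S, hScard, hSdisjF, hSinv⟩ := step_lemma hm
      (fun x => ((Ublocks Bs i).filter fun v => c v = x).card) (Ublocks Bs i).card
      hinv N.card F hFcard hsF
    have e : {x // x ∈ N} ≃ {x // x ∈ S} := Finset.equivOfCardEq hScard.symm
    set c' : V → Fin m := fun v => if h : v ∈ N then (e ⟨v, h⟩ : {x // x ∈ S}) else c v
      with hc'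
    have hc'old : ∀ v ∈ Ublocks Bs i, c' v = c v := by
      intro v hv
      have : v ∉ N := Finset.disjoint_left.mp hdisjUN hv
      simp [hc', this]
    have hc'new : ∀ v (h : v ∈ N), c' v ∈ S := by
      intro v h
      simp only [hc', dif_pos h]
      exact (e ⟨v, h⟩).2
    have hUsucc : Ublocks Bs (i + 1) = Ublocks Bs i ∪ N := by
      rw [Ublocks, Finset.range_add_one, Finset.biUnion_insert]
      rw [show ((Finset.range i).biUnion fun j => Bs.getD j ∅) = Ublocks Bs i from rfl]
      rw [← hB, Finset.union_comm B _, hN, Finset.union_sdiff_self_eq_union]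
    have hUcard : (Ublocks Bs (i + 1)).card = (Ublocks Bs i).card + N.card := by
      rw [hUsucc, Finset.card_union_of_disjoint hdisjUN]
    -- load update
    have hload : ∀ x : Fin m, ((Ublocks Bs (i + 1)).filter fun v => c' v = x).card =
        ((Ublocks Bs i).filter fun v => c v = x).card + (if x ∈ S then 1 else 0) := by
      intro x
      rw [hUsucc, Finset.filter_union,
        Finset.card_union_of_disjoint (Finset.disjoint_filter_filter hdisjUN)]
      congr 1
      · apply congrArg
        apply Finset.filter_congr
        intro v hv
        rw [hc'old v hv]
      · by_cases hx : x ∈ S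
        · rw [if_pos hx]
          have hsing : (N.filter fun v => c' v = x) =
              {((e.symm ⟨x, hx⟩ : {a // a ∈ N}) : V)} := by
            ext v
            rw [Finset.mem_filter, Finset.mem_singleton]
            constructor
            · rintro ⟨hvN, hvx⟩
              have h1 : c' v = (e ⟨v, hvN⟩ : {x // x ∈ S}) := by simp [hc', hvN]
              have h2 : (e ⟨v, hvN⟩ : {x // x ∈ S}) = ⟨x, hx⟩ := Subtype.ext (h1 ▸ hvx)
              have h3 : (⟨v, hvN⟩ : {a // a ∈ N}) = e.symm ⟨x, hx⟩ := by
                rw [← h2, Equiv.symm_apply_apply]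
              exact congrArg Subtype.val h3
            · rintro rfl
              have hmem := (e.symm ⟨x, hx⟩).2
              refine ⟨hmem, ?_⟩
              have h1 : c' ((e.symm ⟨x, hx⟩ : {a // a ∈ N}) : V) =
                  (e ⟨((e.symm ⟨x, hx⟩ : {a // a ∈ N}) : V), hmem⟩ : {x // x ∈ S}) := by
                simp [hc', hmem]
              rw [h1]
              have h2 : (⟨((e.symm ⟨x, hx⟩ : {a // a ∈ N}) : V), hmem⟩ : {a // a ∈ N}) =
                  e.symm ⟨x, hx⟩ := Subtype.ext rfl
              rw [h2, Equiv.apply_symm_apply]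
          rw [hsing, Finset.card_singleton]
        · rw [if_neg hx]
          rw [Finset.card_eq_zero, Finset.filter_eq_empty_iff]
          intro v hvN heq
          exact hx (heq ▸ hc'new v hvN)
    refine ⟨c', ?_, ?_⟩
    · -- properness
      intro u v hu hv hadj
      obtain ⟨l, hl, hul, hvl⟩ := hloc (i + 1) hi1 u v hu hv hadj
      by_cases hli : l < i
      · have huU : u ∈ Ublocks Bs i := mem_Ublocks.mpr ⟨l, hli, hul⟩
        have hvU : v ∈ Ublocks Bs i := mem_Ublocks.mpr ⟨l, hli, hvl⟩
        rw [hc'old u huU, hc'old v hvU]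
        exact hprop u v huU hvU hadj
      · have hleq : l = i := by omega
        rw [hleq] at hul hvl
        rw [← hB] at hul hvl
        by_cases huN : u ∈ N <;> by_cases hvN : v ∈ N
        · intro heq
          have h1 : c' u = (e ⟨u, huN⟩ : {x // x ∈ S}) := by simp [hc', huN]
          have h2 : c' v = (e ⟨v, hvN⟩ : {x // x ∈ S}) := by simp [hc', hvN]
          rw [h1, h2] at heq
          have := e.injective (Subtype.ext heq)
          exact hadj.ne (congrArg Subtype.val this)
        · have hvU : v ∈ Ublocks Bs i := by
            rw [hN, Finset.mem_sdiff] at hvN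
            by_contra h
            exact hvN ⟨hvl, h⟩
          have h1 : c' v = c v := hc'old v hvU
          have h2 : c v ∈ F := by
            rw [hF]
            exact Finset.mem_image_of_mem c (Finset.mem_inter.mpr ⟨hvl, hvU⟩)
          have h3 : c' u ∈ S := hc'new u huN
          intro heq
          rw [heq, h1] at h3
          exact Finset.disjoint_left.mp hSdisjF h3 h2
        · have huU : u ∈ Ublocks Bs i := by
            rw [hN, Finset.mem_sdiff] at huN
            by_contra h
            exact huN ⟨hul, h⟩
          have h1 : c' u = c u := hc'old u huU
          have h2 : c u ∈ F := by
            rw [hF]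
            exact Finset.mem_image_of_mem c (Finset.mem_inter.mpr ⟨hul, huU⟩)
          have h3 : c' v ∈ S := hc'new v hvN
          intro heq
          rw [← heq, h1] at h3
          exact Finset.disjoint_left.mp hSdisjF h3 h2
        · have huU : u ∈ Ublocks Bs i := by
            rw [hN, Finset.mem_sdiff] at huN
            by_contra h
            exact huN ⟨hul, h⟩
          have hvU : v ∈ Ublocks Bs i := by
            rw [hN, Finset.mem_sdiff] at hvN
            by_contra h
            exact hvN ⟨hvl, h⟩
          rw [hc'old u huU, hc'old v hvU]
          exact hprop u v huU hvU hadj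
    · -- invariant
      intro j hj
      have h1 := hSinv j hj
      have h2 : (Finset.univ.filter fun x : Fin m =>
          ((Ublocks Bs (i+1)).card - j + m - 2) / (m - 1) <
            ((Ublocks Bs (i+1)).filter fun v => c' v = x).card) =
          (Finset.univ.filter fun x : Fin m =>
          ((Ublocks Bs i).card + N.card - j + m - 2) / (m - 1) <
            ((Ublocks Bs i).filter fun v => c v = x).card + (if x ∈ S then 1 else 0)) := by
        apply Finset.filter_congr
        intro x _
        rw [hload x, hUcard]
      rw [h2]
      exact h1

/-- A block graph `G` on `n = d(m-1) + r` vertices (`n ≥ 1`, `0 ≤ r ≤ m-2`) with clique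
number at most `m` (`m ≥ 2`) has a proper `m`-coloring in which every color class has at
most `⌈n/(m-1)⌉` vertices; moreover if `r = 0` at least one class is strictly smaller
than `⌈n/(m-1)⌉`, and if `r > 0` at least `m - r` classes are strictly smaller.
Here `⌈n/(m-1)⌉ = (n + m - 2)/(m - 1)` in natural number arithmetic. -/
theorem block_graph_balanced_coloring {V : Type*} [Fintype V] [DecidableEq V]
    (G : SimpleGraph V) (hG : IsBlockGraph G)
    (m : ℕ) (hm : 2 ≤ m)
    (hn : 1 ≤ Fintype.card V)
    (hω : ∀ s : Finset V, G.IsClique (s : Set V) → s.card ≤ m)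
    (d r : ℕ) (hr : r ≤ m - 2)
    (hcard : Fintype.card V = d * (m - 1) + r) :
    ∃ c : V → Fin m,
      (∀ u v, G.Adj u v → c u ≠ c v) ∧
      (∀ i : Fin m, (Finset.univ.filter fun v => c v = i).card
          ≤ (Fintype.card V + m - 2) / (m - 1)) ∧
      (r = 0 → ∃ i : Fin m, (Finset.univ.filter fun v => c v = i).card
          < (Fintype.card V + m - 2) / (m - 1)) ∧
      (0 < r → m - r ≤ (Finset.univ.filter fun i : Fin m =>
          (Finset.univ.filter fun v => c v = i).card
            < (Fintype.card V + m - 2) / (m - 1)).card) := by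
  obtain ⟨Bs, hBG⟩ := hG
  obtain ⟨c, hprop, hinv⟩ := block_induction G Bs hBG m hm hω Bs.length le_rfl
  have hUuniv : Ublocks Bs Bs.length = Finset.univ := by
    ext v
    simp only [Finset.mem_univ, iff_true]
    obtain ⟨B, hBmem, hvB⟩ := hBG.2.1 v
    obtain ⟨⟨l, hl⟩, hB⟩ := List.mem_iff_get.mp hBmem
    refine mem_Ublocks.mpr ⟨l, hl, ?_⟩
    rw [List.getD_eq_getElem _ _ hl]
    have hgl : Bs[l] = B := by rw [← hB, List.get_eq_getElem]
    exact hgl ▸ hvB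
  rw [hUuniv] at hprop hinv
  simp only [Finset.card_univ] at hinv
  have hsum : Fintype.card V = ∑ x : Fin m, (Finset.univ.filter fun v => c v = x).card := by
    rw [← Finset.card_univ (α := V)]
    exact Finset.card_eq_sum_card_fiberwise (fun v _ => Finset.mem_univ (c v))
  have hbound : ∀ x : Fin m, (Finset.univ.filter fun v => c v = x).card
      ≤ (Fintype.card V + m - 2) / (m - 1) := by
    intro x
    by_contra hx
    push_neg at hx
    have h0 := hinv 0 (by omega)
    have hxmem : x ∈ Finset.univ.filter fun y : Fin m =>
        (Fintype.card V - 0 + m - 2) / (m - 1) <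
        (Finset.univ.filter fun v => c v = y).card :=
      Finset.mem_filter.mpr ⟨Finset.mem_univ _, by rw [Nat.sub_zero]; exact hx⟩
    have := Finset.card_pos.mpr ⟨x, hxmem⟩
    exact Nat.lt_irrefl 0 (lt_of_lt_of_le this (le_trans (Finset.card_le_card (fun y hy => by simpa using hy)) h0))
  refine ⟨c, fun u v h => hprop u v (Finset.mem_univ u) (Finset.mem_univ v) h, hbound, ?_, ?_⟩
  · -- r = 0
    intro hr0
    subst hr0
    rw [Nat.add_zero] at hcard
    have hC : (Fintype.card V + m - 2) / (m - 1) = d := by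
      rw [hcard]; exact div_aux1 m d hm
    have hd : 1 ≤ d := by
      rcases Nat.eq_zero_or_pos d with h | h
      · rw [h, Nat.zero_mul] at hcard; omega
      · exact h
    by_contra hcon
    push_neg at hcon
    have hge : ∀ x : Fin m, d ≤ (Finset.univ.filter fun v => c v = x).card := by
      intro x
      have := hcon x
      rw [hC] at this
      exact this
    have hsumge : ∑ x : Fin m, d ≤ ∑ x : Fin m, (Finset.univ.filter fun v => c v = x).card :=
      Finset.sum_le_sum (fun x _ => hge x)
    rw [Finset.sum_const, Finset.card_univ, Fintype.card_fin, smul_eq_mul] at hsumge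
    have hmd : m * d = d * (m - 1) + d := by
      calc m * d = d * ((m - 1) + 1) := by rw [Nat.sub_add_cancel (by omega : 1 ≤ m)]; ring
        _ = d * (m - 1) + d := by ring
    obtain ⟨P, hP⟩ : ∃ P, P = d * (m - 1) := ⟨_, rfl⟩
    rw [← hP] at hcard hmd
    omega
  · -- 0 < r
    intro hrpos
    have hC : (Fintype.card V + m - 2) / (m - 1) = d + 1 := by
      rw [hcard]; exact div_aux2 m d r hm hrpos hr
    have hK : (Fintype.card V - r + m - 2) / (m - 1) = d := by
      rw [hcard, Nat.add_sub_cancel]; exact div_aux1 m d hm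
    have hJ := hinv r (by omega)
    simp only [hK] at hJ
    have hsplit := Finset.card_filter_add_card_filter_not
      (s := (Finset.univ : Finset (Fin m)))
      (p := fun x => d < (Finset.univ.filter fun v => c v = x).card)
    rw [Finset.card_univ, Fintype.card_fin] at hsplit
    have h2 : (Finset.univ.filter fun x : Fin m =>
        ¬ d < (Finset.univ.filter fun v => c v = x).card).card ≤
        (Finset.univ.filter fun x : Fin m =>
        (Finset.univ.filter fun v => c v = x).card < (Fintype.card V + m - 2) / (m - 1)).card := by
      apply Finset.card_le_card
      intro x hx
      rw [Finset.mem_filter] at hx ⊢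
      refine ⟨hx.1, ?_⟩
      rw [hC]
      omega
    omega
end

section
/- Let m ≥ 1 and k ≥ 1 be integers, and let G1, G2 be finite graphs with V(G1) ∩ V(G2) = {v} and with no edges between V(G1)∖{v} and V(G2)∖{v}; let G = G1 ∪ G2 (union of vertex sets and edge sets). Then a pattern (s, M) is feasible for (G, v, m, k) if and only if there exist a feasible pattern (s1, M1) for (G1, v, m, k) and a feasible pattern (s2, M2) for (G2, v, m, k) with s = s1 + s2 − 1 ≤ k, together with enumerations M1 = {a_1, …, a_{m−1}} and M2 = {b_1, …, b_{m−1}} (as multisets) such that a_t + b_t ≤ k for all 1 ≤ t ≤ m−1 and M = {a_1 + b_1, …, a_{m−1} + b_{m−1}} (as a multiset). -/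
lemma exists_comp_perm {n : ℕ} (a a' : Fin n → ℕ)
    (h : (List.ofFn a : Multiset ℕ) = (List.ofFn a' : Multiset ℕ)) :
    ∃ ρ : Equiv.Perm (Fin n), ∀ t, a' (ρ t) = a t := by
  have hp : (List.ofFn a).Perm (List.ofFn a') := Multiset.coe_eq_coe.mp h
  have h1 : a ∘ Tuple.sort a = a' ∘ Tuple.sort a' := by
    apply List.ofFn_injective
    have hpp : (List.ofFn (a ∘ Tuple.sort a)).Perm (List.ofFn (a' ∘ Tuple.sort a')) :=
      ((Tuple.sort a).ofFn_comp_perm a).trans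
        (hp.trans ((Tuple.sort a').ofFn_comp_perm a').symm)
    exact hpp.eq_of_sortedLE (Tuple.monotone_sort a).sortedLE_ofFn
      (Tuple.monotone_sort a').sortedLE_ofFn
  refine ⟨(Tuple.sort a).symm.trans (Tuple.sort a'), fun t => ?_⟩
  have := congrFun h1 ((Tuple.sort a).symm t)
  simpa using this.symm

lemma finset_val_map_eq_ofFn {m n : ℕ} (T : Finset (Fin m)) (e : Fin n ≃ {x // x ∈ T})
    (f : Fin m → ℕ) :
    T.val.map f = ((List.ofFn (fun t => f (e t))) : Multiset ℕ) := by
  have h1 : T.attach = Finset.univ.map e.toEmbedding := by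
    rw [Finset.map_univ_equiv, Finset.univ_eq_attach]
  have h2 : T.val = T.attach.val.map Subtype.val := by
    rw [Finset.attach_val, Multiset.attach_map_val]
  rw [h2, h1, Finset.map_val, Multiset.map_map, Multiset.map_map]
  exact Fin.univ_val_map _

lemma key_count {V : Type*} [Fintype V] [DecidableEq V] {m : ℕ}
    (S1 S2 : Finset V) (v : V) (hGlue : S1 ∩ S2 = {v}) (hCover : S1 ∪ S2 = Finset.univ)
    (c : V → Fin m) (i : Fin m) :
    (Finset.univ.filter (fun x => c x = i)).card + (if c v = i then 1 else 0) =
      (S1.filter (fun x => c x = i)).card + (S2.filter (fun x => c x = i)).card := by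
  have h := Finset.card_union_add_card_inter (S1.filter (fun x => c x = i))
    (S2.filter (fun x => c x = i))
  rw [← Finset.filter_union, ← Finset.filter_inter_distrib, hCover, hGlue] at h
  rw [← h]
  congr 1
  rw [Finset.filter_singleton]
  split <;> simp

/-- `(A, M)` is a feasible pattern for the graph `G` restricted to the vertex set `S`,
relative to the subset `W ⊆ S`, with `m` colors and class-size bound `k`: some coloring
of `S` that is proper for the edges of `G` inside `S`, has all color classes (within
`S`) of size at most `k`, and is injective on `W`, realizes `A` as the multiset of the
class sizes of the colors used on `W` and `M` as the multiset of the class sizes of the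
remaining colors. -/
def PatternFeasible {V : Type*} [Fintype V] [DecidableEq V]
    (G : SimpleGraph V) (S W : Finset V) (m k : ℕ)
    (A M : Multiset ℕ) : Prop :=
  W ⊆ S ∧
  ∃ c : V → Fin m,
    (∀ x ∈ S, ∀ y ∈ S, G.Adj x y → c x ≠ c y) ∧
    (∀ i : Fin m, (S.filter (fun x => c x = i)).card ≤ k) ∧
    Set.InjOn c (W : Set V) ∧
    A = (W.image c).val.map (fun i => (S.filter (fun x => c x = i)).card) ∧
    M = ((W.image c)ᶜ : Finset (Fin m)).val.map
          (fun i => (S.filter (fun x => c x = i)).card)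

/-- Merging patterns at a common cut-vertex: if `G` is the union of two graphs with
vertex sets `S1` and `S2` sharing exactly the vertex `v` (every edge lies inside `S1`
or inside `S2`), then `(s, M)` is a feasible pattern for `(G, v, m, k)` iff it arises
from feasible patterns `(s1, M1)` and `(s2, M2)` of the two parts with
`s = s1 + s2 - 1 ≤ k`, via enumerations `a`, `b` of `M1`, `M2` with `a t + b t ≤ k`
for all `t` and `M = {a t + b t}`. -/
theorem pattern_merge_at_cut_vertex {V : Type*} [Fintype V] [DecidableEq V]
    (m k : ℕ) (hm : 1 ≤ m) (hk : 1 ≤ k)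
    (G : SimpleGraph V) (S1 S2 : Finset V) (v : V)
    (hGlue : S1 ∩ S2 = {v}) (hCover : S1 ∪ S2 = Finset.univ)
    (hEdges : ∀ x y : V, G.Adj x y → (x ∈ S1 ∧ y ∈ S1) ∨ (x ∈ S2 ∧ y ∈ S2))
    (s : ℕ) (M : Multiset ℕ) :
    PatternFeasible G Finset.univ {v} m k {s} M ↔
      ∃ (s1 : ℕ) (M1 : Multiset ℕ) (s2 : ℕ) (M2 : Multiset ℕ)
        (a b : Fin (m - 1) → ℕ),
        PatternFeasible G S1 {v} m k {s1} M1 ∧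
        PatternFeasible G S2 {v} m k {s2} M2 ∧
        s = s1 + s2 - 1 ∧ s ≤ k ∧
        M1 = (List.ofFn a : Multiset ℕ) ∧
        M2 = (List.ofFn b : Multiset ℕ) ∧
        (∀ t : Fin (m - 1), a t + b t ≤ k) ∧
        M = (List.ofFn (fun t => a t + b t) : Multiset ℕ) := by
  have hv1 : v ∈ S1 := by
    have : v ∈ S1 ∩ S2 := hGlue ▸ Finset.mem_singleton_self v
    exact (Finset.mem_inter.mp this).1
  have hv2 : v ∈ S2 := by
    have : v ∈ S1 ∩ S2 := hGlue ▸ Finset.mem_singleton_self v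
    exact (Finset.mem_inter.mp this).2
  constructor
  · rintro ⟨-, c, hprop, hcard, -, hA, hM⟩
    set F : Fin m → ℕ := fun i => (Finset.univ.filter (fun x => c x = i)).card with hF
    set F1 : Fin m → ℕ := fun i => (S1.filter (fun x => c x = i)).card with hF1
    set F2 : Fin m → ℕ := fun i => (S2.filter (fun x => c x = i)).card with hF2
    have key : ∀ i, F i + (if c v = i then 1 else 0) = F1 i + F2 i :=
      key_count S1 S2 v hGlue hCover c
    have hs : s = F (c v) := by
      rw [Finset.image_singleton] at hA
      simpa using hA
    set T : Finset (Fin m) := ({c v} : Finset (Fin m))ᶜ with hT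
    have hTcard : T.card = m - 1 := by
      simp [hT, Finset.card_compl]
    let e : Fin (m - 1) ≃ {x // x ∈ T} := (T.equivFin.trans (finCongr hTcard)).symm
    have heT : ∀ t, ((e t : Fin m)) ≠ c v := by
      intro t
      have h2 : (e t : Fin m) ∈ ({c v} : Finset (Fin m))ᶜ := (e t).2
      rw [Finset.mem_compl, Finset.mem_singleton] at h2
      exact h2
    refine ⟨F1 (c v), T.val.map F1, F2 (c v), T.val.map F2,
      fun t => F1 (e t), fun t => F2 (e t), ?_, ?_, ?_, ?_, ?_, ?_, ?_, ?_⟩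
    · refine ⟨by simpa using hv1, c, fun x hx y hy h => hprop x (Finset.mem_univ x) y
        (Finset.mem_univ y) h, fun i => le_trans (Finset.card_le_card
          (Finset.filter_subset_filter _ (Finset.subset_univ S1))) (hcard i),
        by simpa using Set.injOn_singleton c v, by simp [hF1], by simp [hT, hF1]⟩
    · refine ⟨by simpa using hv2, c, fun x hx y hy h => hprop x (Finset.mem_univ x) y
        (Finset.mem_univ y) h, fun i => le_trans (Finset.card_le_card
          (Finset.filter_subset_filter _ (Finset.subset_univ S2))) (hcard i),
        by simpa using Set.injOn_singleton c v, by simp [hF2], by simp [hT, hF2]⟩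
    · have h := key (c v)
      rw [if_pos rfl] at h
      omega
    · rw [hs]; exact hcard (c v)
    · exact finset_val_map_eq_ofFn T e F1
    · exact finset_val_map_eq_ofFn T e F2
    · intro t
      show F1 (e t) + F2 (e t) ≤ k
      have h := key (e t)
      rw [if_neg (fun hh => heT t hh.symm)] at h
      have h2 : F (e t) ≤ k := hcard _
      omega
    · rw [Finset.image_singleton] at hM
      rw [hM]
      rw [finset_val_map_eq_ofFn T e F]
      congr 1
      exact congrArg List.ofFn (funext fun t => by
        have h := key (e t)
        rw [if_neg (fun hh => heT t hh.symm)] at h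
        show F (e t) = F1 (e t) + F2 (e t)
        omega)
  · rintro ⟨s1, M1, s2, M2, a, b, ⟨-, c1, hp1, hk1, -, hA1, hM1⟩,
      ⟨-, c2, hp2, hk2, -, hA2, hM2⟩, hs, hsk, ha, hb, hab, hMeq⟩
    rw [Finset.image_singleton] at hA1 hM1 hA2 hM2
    set f1 : Fin m → ℕ := fun i => (S1.filter (fun x => c1 x = i)).card with hf1
    set f2 : Fin m → ℕ := fun i => (S2.filter (fun x => c2 x = i)).card with hf2
    have hs1 : s1 = f1 (c1 v) := by simpa using hA1
    have hs2 : s2 = f2 (c2 v) := by simpa using hA2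
    set T1 : Finset (Fin m) := ({c1 v} : Finset (Fin m))ᶜ with hT1
    set T2 : Finset (Fin m) := ({c2 v} : Finset (Fin m))ᶜ with hT2
    have hT1card : T1.card = m - 1 := by simp [hT1, Finset.card_compl]
    have hT2card : T2.card = m - 1 := by simp [hT2, Finset.card_compl]
    let e1 : Fin (m - 1) ≃ {x // x ∈ T1} := (T1.equivFin.trans (finCongr hT1card)).symm
    let e2 : Fin (m - 1) ≃ {x // x ∈ T2} := (T2.equivFin.trans (finCongr hT2card)).symm
    have hM1' : (List.ofFn a : Multiset ℕ) = List.ofFn (fun t => f1 (e1 t)) := by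
      rw [← ha, hM1]; exact finset_val_map_eq_ofFn T1 e1 f1
    have hM2' : (List.ofFn b : Multiset ℕ) = List.ofFn (fun t => f2 (e2 t)) := by
      rw [← hb, hM2]; exact finset_val_map_eq_ofFn T2 e2 f2
    obtain ⟨ρ1, hρ1⟩ := exists_comp_perm a _ hM1'
    obtain ⟨ρ2, hρ2⟩ := exists_comp_perm b _ hM2'
    set σ1 : Fin (m - 1) ≃ {x // x ∈ T1} := ρ1.trans e1 with hσ1def
    set σ2 : Fin (m - 1) ≃ {x // x ∈ T2} := ρ2.trans e2 with hσ2def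
    have hσ1 : ∀ t, f1 (σ1 t) = a t := fun t => hρ1 t
    have hσ2 : ∀ t, f2 (σ2 t) = b t := fun t => hρ2 t
    have mem1 : ∀ t, ((σ1 t : Fin m)) ≠ c1 v := by
      intro t
      have h2 : (σ1 t : Fin m) ∈ ({c1 v} : Finset (Fin m))ᶜ := (σ1 t).2
      rw [Finset.mem_compl, Finset.mem_singleton] at h2; exact h2
    have mem2 : ∀ t, ((σ2 t : Fin m)) ≠ c2 v := by
      intro t
      have h2 : (σ2 t : Fin m) ∈ ({c2 v} : Finset (Fin m))ᶜ := (σ2 t).2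
      rw [Finset.mem_compl, Finset.mem_singleton] at h2; exact h2
    set pf : Fin m → Fin m := fun i =>
      if h : i = c2 v then c1 v else
        (σ1 (σ2.symm ⟨i, Finset.mem_compl.mpr (by simpa using h)⟩) : Fin m) with hpf
    set pg : Fin m → Fin m := fun j =>
      if h : j = c1 v then c2 v else
        (σ2 (σ1.symm ⟨j, Finset.mem_compl.mpr (by simpa using h)⟩) : Fin m) with hpg
    have hpf1 : pf (c2 v) = c1 v := by simp [hpf]
    have hpg1 : pg (c1 v) = c2 v := by simp [hpg]
    have hpfσ : ∀ t, pf (σ2 t) = σ1 t := by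
      intro t
      simp only [hpf]
      rw [dif_neg (mem2 t)]
      congr 1
      rw [Subtype.coe_eta, Equiv.symm_apply_apply]
    have hpgσ : ∀ t, pg (σ1 t) = σ2 t := by
      intro t
      simp only [hpg]
      rw [dif_neg (mem1 t)]
      congr 1
      rw [Subtype.coe_eta, Equiv.symm_apply_apply]
    have hLI : Function.LeftInverse pg pf := by
      intro i
      by_cases h : i = c2 v
      · subst h; rw [hpf1, hpg1]
      · have hmem : i ∈ T2 := Finset.mem_compl.mpr (by simpa using h)
        have h1 : pf i = σ1 (σ2.symm ⟨i, hmem⟩) := by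
          simp only [hpf]; rw [dif_neg h]
        rw [h1, hpgσ]
        rw [Equiv.apply_symm_apply]
    have hinj : Function.Injective pf := hLI.injective
    set c : V → Fin m := fun x => if x ∈ S1 then c1 x else pf (c2 x) with hc
    have hc1 : ∀ x ∈ S1, c x = c1 x := fun x hx => by simp only [hc]; rw [if_pos hx]
    have hcv : c v = c1 v := hc1 v hv1
    have hc2 : ∀ x ∈ S2, c x = pf (c2 x) := by
      intro x hx
      by_cases h : x ∈ S1
      · have hxv : x = v := by
          have hxm : x ∈ S1 ∩ S2 := Finset.mem_inter.mpr ⟨h, hx⟩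
          rw [hGlue] at hxm; exact Finset.mem_singleton.mp hxm
        subst hxv
        rw [hcv, ← hpf1]
      · simp only [hc]; rw [if_neg h]
    set F : Fin m → ℕ := fun i => (Finset.univ.filter (fun x => c x = i)).card with hF
    have key : ∀ i, F i + (if c v = i then 1 else 0) =
        (S1.filter (fun x => c x = i)).card + (S2.filter (fun x => c x = i)).card :=
      key_count S1 S2 v hGlue hCover c
    have hg1 : ∀ i, S1.filter (fun x => c x = i) = S1.filter (fun x => c1 x = i) :=
      fun i => Finset.filter_congr (fun x hx => by rw [hc1 x hx])
    have hg2 : ∀ i, S2.filter (fun x => c x = i) = S2.filter (fun x => pf (c2 x) = i) :=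
      fun i => Finset.filter_congr (fun x hx => by rw [hc2 x hx])
    have h2a : S2.filter (fun x => pf (c2 x) = c1 v) = S2.filter (fun x => c2 x = c2 v) :=
      Finset.filter_congr (fun x _ => by rw [← hpf1, hinj.eq_iff])
    have h2b : ∀ t, S2.filter (fun x => pf (c2 x) = (σ1 t : Fin m)) =
        S2.filter (fun x => c2 x = (σ2 t : Fin m)) :=
      fun t => Finset.filter_congr (fun x _ => by rw [← hpfσ t, hinj.eq_iff])
    have keyA : F (c1 v) + 1 = f1 (c1 v) + f2 (c2 v) := by
      have h := key (c1 v)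
      rw [if_pos hcv, hg1, hg2, h2a] at h
      exact h
    have keyB : ∀ t, F (σ1 t) = a t + b t := by
      intro t
      have h := key (σ1 t)
      rw [if_neg (fun hh => mem1 t ((hcv ▸ hh).symm)), hg1, hg2, h2b] at h
      have q1 : (Finset.filter (fun x => c1 x = (σ1 t : Fin m)) S1).card = a t := hσ1 t
      have q2 : (Finset.filter (fun x => c2 x = (σ2 t : Fin m)) S2).card = b t := hσ2 t
      omega
    have hs1pos : 1 ≤ s1 := by
      rw [hs1]
      exact Finset.card_pos.mpr ⟨v, Finset.mem_filter.mpr ⟨hv1, rfl⟩⟩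
    have hFs : F (c1 v) = s := by omega
    have hFk : ∀ i, F i ≤ k := by
      intro i
      by_cases h : i = c1 v
      · subst h; rw [hFs]; exact hsk
      · have hmem : i ∈ T1 := Finset.mem_compl.mpr (by simpa using h)
        have hi : (σ1 (σ1.symm ⟨i, hmem⟩) : Fin m) = i := by
          rw [Equiv.apply_symm_apply]
        calc F i = F (σ1 (σ1.symm ⟨i, hmem⟩) : Fin m) := by rw [hi]
          _ = a _ + b _ := keyB _
          _ ≤ k := hab _
    refine ⟨Finset.subset_univ _, c, ?_, hFk, by simpa using Set.injOn_singleton c v, ?_, ?_⟩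
    · intro x _ y _ hxy
      rcases hEdges x y hxy with ⟨hx, hy⟩ | ⟨hx, hy⟩
      · rw [hc1 x hx, hc1 y hy]; exact hp1 x hx y hy hxy
      · rw [hc2 x hx, hc2 y hy]
        intro h
        exact hp2 x hx y hy hxy (hinj h)
    · have himg : ({v} : Finset V).image c = {c1 v} := by
        rw [Finset.image_singleton, hcv]
      rw [himg]
      simp only [Finset.singleton_val, Multiset.map_singleton]
      rw [Multiset.singleton_inj]
      exact hFs.symm
    · have himg : ({v} : Finset V).image c = {c1 v} := by
        rw [Finset.image_singleton, hcv]
      rw [himg, finset_val_map_eq_ofFn (({c1 v} : Finset (Fin m))ᶜ) σ1 F, hMeq]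
      congr 1
      exact congrArg List.ofFn (funext fun t => (keyB t).symm)
end

section
/- Let m ≥ 1 and k ≥ 1 be integers, let G1 and G2 be vertex-disjoint finite graphs, let U ⊆ V(G1) with q := |U| ≤ m − 2, let u ∈ V(G2), and let G = G1 ⊔ G2 be their disjoint union. Then a pattern (A, M) is feasible for (G, U ∪ {u}, m, k) if and only if there exist a feasible pattern (A1, M1) for (G1, U, m, k), a feasible pattern (s2, M2) for (G2, {u}, m, k), an element l of the multiset M1 with l + s2 ≤ k, and enumerations A1 = {x_1, …, x_q}, M1 ∖ {l} = {y_1, …, y_{m−1−q}}, and M2 = {z_1, …, z_{m−1}} (as multisets) such that x_t + z_t ≤ k for 1 ≤ t ≤ q, y_t + z_{q+t} ≤ k for 1 ≤ t ≤ m−1−q, A = {x_1 + z_1, …, x_q + z_q, l + s2} and M = {y_1 + z_{q+1}, …, y_{m−1−q} + z_{m−1}} (as multisets). -/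
open Finset

lemma ms_map_eq_ofFn {α : Type*} [DecidableEq α] :
    ∀ {n : ℕ} (g : Fin n → ℕ) (s : Multiset α) (f : α → ℕ),
      s.map f = ((List.ofFn g : List ℕ) : Multiset ℕ) →
      ∃ e : Fin n → α, s = ((List.ofFn e : List α) : Multiset α) ∧ ∀ t, f (e t) = g t := by
  intro n
  induction n with
  | zero =>
    intro g s f h
    refine ⟨Fin.elim0, ?_, fun t => t.elim0⟩
    simpa using (Multiset.map_eq_zero (f := f) (s := s)).mp (by simpa using h)
  | succ n ih =>
    intro g s f h
    have hmem : g 0 ∈ s.map f := by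
      rw [h]; simp [List.ofFn_succ]
    obtain ⟨a, ha, hfa⟩ := Multiset.mem_map.mp hmem
    have hs : s = a ::ₘ s.erase a := (Multiset.cons_erase ha).symm
    have h2 : (s.erase a).map f = ((List.ofFn (g ∘ Fin.succ) : List ℕ) : Multiset ℕ) := by
      have : f a ::ₘ (s.erase a).map f = g 0 ::ₘ ((List.ofFn (g ∘ Fin.succ) : List ℕ) : Multiset ℕ) := by
        rw [← Multiset.map_cons, ← hs, h, List.ofFn_succ]
        rfl
      rw [hfa] at this
      exact (Multiset.cons_inj_right _).mp this
    obtain ⟨e', he', hfe'⟩ := ih (g ∘ Fin.succ) (s.erase a) f h2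
    refine ⟨Fin.cons a e', ?_, ?_⟩
    · rw [hs, he', List.ofFn_succ]
      simp
    · intro t
      refine Fin.cases ?_ ?_ t
      · simpa using hfa
      · intro i; simpa using hfe' i

lemma ms_split_of_map_add {α : Type*} [DecidableEq α] (f : α → ℕ) :
    ∀ (t1 : Multiset ℕ) (s : Multiset α) (t2 : Multiset ℕ),
      s.map f = t1 + t2 → ∃ s1 s2, s = s1 + s2 ∧ s1.map f = t1 ∧ s2.map f = t2 := by
  intro t1
  induction t1 using Multiset.induction_on with
  | empty =>
    intro s t2 h
    exact ⟨0, s, by simp, by simp, by simpa using h⟩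
  | cons a t1 ih =>
    intro s t2 h
    have hmem : a ∈ s.map f := by rw [h]; simp
    obtain ⟨b, hb, hfb⟩ := Multiset.mem_map.mp hmem
    have hs : s = b ::ₘ s.erase b := (Multiset.cons_erase hb).symm
    have h2 : (s.erase b).map f = t1 + t2 := by
      have : f b ::ₘ (s.erase b).map f = a ::ₘ (t1 + t2) := by
        rw [← Multiset.map_cons, ← hs, h]; simp [Multiset.cons_add]
      rw [hfb] at this
      exact (Multiset.cons_inj_right _).mp this
    obtain ⟨s1, s2, hss, h1, h2'⟩ := ih (s.erase b) t2 h2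
    exact ⟨b ::ₘ s1, s2, by rw [hs, hss]; simp [Multiset.cons_add], by simp [h1, hfb], h2'⟩

lemma finset_val_eq_ofFn {α : Type*} [DecidableEq α] (s : Finset α) (n : ℕ) (h : s.card = n) :
    ∃ e : Fin n → α, s.val = ((List.ofFn e : List α) : Multiset α) := by
  refine ⟨fun i => s.toList.get (Fin.cast (by rw [Finset.length_toList, h]) i), ?_⟩
  rw [← Finset.coe_toList s]
  congr 1
  have := List.ofFn_get s.toList
  conv_lhs => rw [← this]
  have hn : s.toList.length = n := by rw [Finset.length_toList, h]
  subst hn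
  rfl

lemma filter_card_split {V : Type*} [Fintype V] [DecidableEq V] (S1 S2 : Finset V)
    (hdisj : Disjoint S1 S2) (hcover : S1 ∪ S2 = Finset.univ) (p : V → Prop) [DecidablePred p] :
    (Finset.univ.filter p).card = (S1.filter p).card + (S2.filter p).card := by
  rw [← hcover, Finset.filter_union,
    Finset.card_union_of_disjoint (Finset.disjoint_filter_filter hdisj)]

lemma insert_val_not_mem {α : Type*} [DecidableEq α] {a : α} {s : Finset α} (h : a ∉ s) :
    (insert a s).val = a ::ₘ s.val := by
  rw [Finset.insert_val, Multiset.ndinsert_of_notMem (by simpa using h)]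




/-- Merging patterns of disjoint branches hanging below distinct vertices of one block:
if `G` is the disjoint union of two graphs with vertex sets `S1`, `S2` (every edge lies
inside `S1` or inside `S2`), `U ⊆ S1` with `|U| = q ≤ m - 2` and `u ∈ S2`, then `(A, M)`
is a feasible pattern for `(G, U ∪ {u}, m, k)` iff it arises from a feasible pattern
`(A1, M1)` for `(G1, U)` and a feasible pattern `(s2, M2)` for `(G2, u)`, an element
`l ∈ M1` with `l + s2 ≤ k`, and enumerations `x` of `A1`, `y` of `M1 ∖ {l}` and
`z1 ++ z2` of `M2` with the indicated pairwise sums bounded by `k`, realizing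
`A = {x t + z1 t} + {l + s2}` and `M = {y t + z2 t}`. -/
theorem pattern_merge_within_block {V : Type*} [Fintype V] [DecidableEq V]
    (m k : ℕ) (hm : 1 ≤ m) (hk : 1 ≤ k)
    (G : SimpleGraph V) (S1 S2 : Finset V)
    (hdisj : Disjoint S1 S2) (hcover : S1 ∪ S2 = Finset.univ)
    (hEdges : ∀ x y : V, G.Adj x y → (x ∈ S1 ∧ y ∈ S1) ∨ (x ∈ S2 ∧ y ∈ S2))
    (U : Finset V) (hU : U ⊆ S1) (q : ℕ) (hq : U.card = q) (hqm : q ≤ m - 2)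
    (u : V) (hu : u ∈ S2)
    (A M : Multiset ℕ) :
    PatternFeasible G Finset.univ (insert u U) m k A M ↔
      ∃ (A1 M1 : Multiset ℕ) (s2 : ℕ) (M2 : Multiset ℕ) (l : ℕ)
        (x z1 : Fin q → ℕ) (y z2 : Fin (m - 1 - q) → ℕ),
        PatternFeasible G S1 U m k A1 M1 ∧
        PatternFeasible G S2 {u} m k {s2} M2 ∧
        l ∈ M1 ∧ l + s2 ≤ k ∧
        A1 = (List.ofFn x : Multiset ℕ) ∧
        M1.erase l = (List.ofFn y : Multiset ℕ) ∧
        M2 = (List.ofFn z1 : Multiset ℕ) + (List.ofFn z2 : Multiset ℕ) ∧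
        (∀ t : Fin q, x t + z1 t ≤ k) ∧
        (∀ t : Fin (m - 1 - q), y t + z2 t ≤ k) ∧
        A = (List.ofFn (fun t => x t + z1 t) : Multiset ℕ) + {l + s2} ∧
        M = (List.ofFn (fun t => y t + z2 t) : Multiset ℕ) := by
  have huU : u ∉ U := fun h => Finset.disjoint_left.mp hdisj (hU h) hu
  constructor
  · rintro ⟨-, c, hprop, hsize, hinj, hAeq, hMeq⟩
    set f1 : Fin m → ℕ := fun i => (S1.filter (fun x => c x = i)).card with hf1
    set f2 : Fin m → ℕ := fun i => (S2.filter (fun x => c x = i)).card with hf2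
    have hF : ∀ i : Fin m, (Finset.univ.filter (fun x => c x = i)).card = f1 i + f2 i :=
      fun i => filter_card_split S1 S2 hdisj hcover _
    have hinjU : Set.InjOn c (U : Set V) := hinj.mono (by intro x hx; simp only [Finset.coe_insert, Set.mem_insert_iff]; exact Or.inr hx)
    have hcu : c u ∉ U.image c := by
      intro h
      obtain ⟨w, hw, hw2⟩ := Finset.mem_image.mp h
      have : w = u := hinj (by simp [hw]) (by simp) hw2
      exact huU (this ▸ hw)
    have hcardim : (U.image c).card = q := by
      rw [Finset.card_image_of_injOn hinjU, hq]
    have hcompl_mem : c u ∈ (U.image c)ᶜ := Finset.mem_compl.mpr hcu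
    have hcardcompl : ((U.image c)ᶜ.erase (c u)).card = m - 1 - q := by
      rw [Finset.card_erase_of_mem hcompl_mem, Finset.card_compl, hcardim]
      simp only [Fintype.card_fin]
      omega
    obtain ⟨α, hα⟩ := finset_val_eq_ofFn (U.image c) q hcardim
    obtain ⟨β, hβ⟩ := finset_val_eq_ofFn ((U.image c)ᶜ.erase (c u)) (m - 1 - q) hcardcompl
    have hcompl_val : ((U.image c)ᶜ).val = c u ::ₘ ((U.image c)ᶜ.erase (c u)).val := by
      rw [Finset.erase_val]
      exact (Multiset.cons_erase (by simpa using hcompl_mem)).symm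
    refine ⟨(U.image c).val.map f1, ((U.image c)ᶜ).val.map f1, f2 (c u),
      (({c u} : Finset (Fin m))ᶜ).val.map f2, f1 (c u),
      f1 ∘ α, f2 ∘ α, f1 ∘ β, f2 ∘ β, ?_, ?_, ?_, ?_, ?_, ?_, ?_, ?_, ?_, ?_, ?_⟩
    · refine ⟨hU, c, fun x hx y hy hadj => hprop x (Finset.mem_univ x) y (Finset.mem_univ y) hadj,
        fun i => le_trans (Finset.card_le_card
          (Finset.filter_subset_filter _ (Finset.subset_univ S1))) (hsize i), hinjU, rfl, rfl⟩
    · refine ⟨Finset.singleton_subset_iff.mpr hu, c,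
        fun x hx y hy hadj => hprop x (Finset.mem_univ x) y (Finset.mem_univ y) hadj,
        fun i => le_trans (Finset.card_le_card
          (Finset.filter_subset_filter _ (Finset.subset_univ S2))) (hsize i), ?_, ?_, rfl⟩
      · simp [Set.InjOn]
      · simp [hf2]
    · exact Multiset.mem_map.mpr ⟨c u, by simpa using hcompl_mem, rfl⟩
    · calc f1 (c u) + f2 (c u) = _ := (hF (c u)).symm
        _ ≤ k := hsize (c u)
    · rw [hα, Multiset.map_coe, List.map_ofFn]
    · rw [hcompl_val, Multiset.map_cons, Multiset.erase_cons_head, hβ,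
        Multiset.map_coe, List.map_ofFn]
    · have hdU : Disjoint (U.image c) ((U.image c)ᶜ.erase (c u)) :=
        Finset.disjoint_left.mpr fun a ha ha' => by
          have := Finset.mem_of_mem_erase ha'
          exact (Finset.mem_compl.mp this) ha
      have hset : ({c u} : Finset (Fin m))ᶜ = (U.image c).disjUnion ((U.image c)ᶜ.erase (c u)) hdU := by
        ext a
        simp only [Finset.mem_compl, Finset.mem_singleton, Finset.mem_disjUnion,
          Finset.mem_erase]
        constructor
        · intro h
          by_cases ha : a ∈ U.image c
          · exact Or.inl ha
          · exact Or.inr ⟨h, ha⟩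
        · rintro (h | ⟨h, -⟩)
          · rintro rfl; exact hcu h
          · exact h
      have hval : ((U.image c).disjUnion ((U.image c)ᶜ.erase (c u)) hdU).val =
          (U.image c).val + ((U.image c)ᶜ.erase (c u)).val := rfl
      rw [hset, hval, Multiset.map_add, hα, hβ, Multiset.map_coe,
        Multiset.map_coe, List.map_ofFn, List.map_ofFn]
    · intro t
      calc f1 (α t) + f2 (α t) = _ := (hF (α t)).symm
        _ ≤ k := hsize (α t)
    · intro t
      calc f1 (β t) + f2 (β t) = _ := (hF (β t)).symm
        _ ≤ k := hsize (β t)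
    · rw [hAeq, Finset.image_insert, insert_val_not_mem hcu, Multiset.map_cons, hα,
        Multiset.map_coe, List.map_ofFn]
      have h1 : (Finset.univ.filter (fun x => c x = c u)).card = f1 (c u) + f2 (c u) := hF (c u)
      have h2 : ((fun i => (Finset.univ.filter (fun x => c x = i)).card) ∘ α) =
          fun t => (f1 ∘ α) t + (f2 ∘ α) t := by
        funext t; exact hF (α t)
      rw [h1, h2]
      rw [add_comm ((List.ofFn fun t => (f1 ∘ α) t + (f2 ∘ α) t : List ℕ) : Multiset ℕ)]
      rfl
    · rw [hMeq, Finset.image_insert, Finset.compl_insert, hβ, Multiset.map_coe, List.map_ofFn]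
      have : ((fun i => (Finset.univ.filter (fun x => c x = i)).card) ∘ β) =
          fun t => (f1 ∘ β) t + (f2 ∘ β) t := funext fun t => hF (β t)
      rw [this]
  · rintro ⟨A1, M1, s2, M2, l, x, z1, y, z2,
      ⟨hUS1, c1, hprop1, hsize1, hinj1, hA1, hM1⟩,
      ⟨huS2, c2, hprop2, hsize2, hinj2, hs2eq, hM2eq⟩,
      hlM1, hls2, hA1x, hM1y, hM2z, hxz, hyz, hAeq, hMeq⟩
    set f1 : Fin m → ℕ := fun i => (S1.filter (fun v => c1 v = i)).card with hf1
    set f2 : Fin m → ℕ := fun i => (S2.filter (fun v => c2 v = i)).card with hf2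
    -- s2 = f2 (c2 u)
    have hs2 : s2 = f2 (c2 u) := by
      have : ({s2} : Multiset ℕ) = {f2 (c2 u)} := by
        rw [hs2eq]; simp
      simpa using this
    -- find i0
    have hlmem : l ∈ ((U.image c1)ᶜ : Finset (Fin m)).val.map f1 := by rw [← hM1]; exact hlM1
    obtain ⟨i0, hi0mem, hi0l⟩ := Multiset.mem_map.mp hlmem
    have hi0 : i0 ∉ U.image c1 := Finset.mem_compl.mp (by simpa using hi0mem)
    -- enumeration α of U.image c1
    have hxeq : (U.image c1).val.map f1 = ((List.ofFn x : List ℕ) : Multiset ℕ) := by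
      rw [← hA1, hA1x]
    obtain ⟨α, hα, hαx⟩ := ms_map_eq_ofFn x (U.image c1).val f1 hxeq
    have hαinj : Function.Injective α := by
      have : ((List.ofFn α : List (Fin m)) : Multiset (Fin m)).Nodup := hα ▸ (U.image c1).nodup
      exact List.nodup_ofFn.mp (by simpa using this)
    have hαmem : ∀ t, α t ∈ U.image c1 := by
      intro t
      have : α t ∈ (U.image c1).val := by
        rw [hα]; exact Multiset.mem_coe.mpr (List.mem_ofFn.mpr ⟨t, rfl⟩)
      exact this
    -- enumeration β of (U.image c1)ᶜ.erase i0
    have hcomplval : ((U.image c1)ᶜ : Finset (Fin m)).val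
        = i0 ::ₘ ((U.image c1)ᶜ.erase i0).val := by
      rw [Finset.erase_val]
      exact (Multiset.cons_erase (by simpa using hi0mem)).symm
    have hyeq : ((U.image c1)ᶜ.erase i0).val.map f1 = ((List.ofFn y : List ℕ) : Multiset ℕ) := by
      have : M1.erase l = ((U.image c1)ᶜ.erase i0).val.map f1 := by
        rw [hM1, hcomplval, Multiset.map_cons, hi0l, Multiset.erase_cons_head]
      rw [← this, hM1y]
    obtain ⟨β, hβ, hβy⟩ := ms_map_eq_ofFn y ((U.image c1)ᶜ.erase i0).val f1 hyeq
    have hβinj : Function.Injective β := by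
      have : ((List.ofFn β : List (Fin m)) : Multiset (Fin m)).Nodup :=
        hβ ▸ ((U.image c1)ᶜ.erase i0).nodup
      exact List.nodup_ofFn.mp (by simpa using this)
    have hβmem : ∀ t, β t ∈ (U.image c1)ᶜ.erase i0 := by
      intro t
      have : β t ∈ ((U.image c1)ᶜ.erase i0).val := by
        rw [hβ]; exact Multiset.mem_coe.mpr (List.mem_ofFn.mpr ⟨t, rfl⟩)
      exact this
    -- enumerations γ1 γ2 of {c2 u}ᶜ
    have hzeq : (({c2 u} : Finset (Fin m))ᶜ).val.map f2
        = ((List.ofFn z1 : List ℕ) : Multiset ℕ) + ((List.ofFn z2 : List ℕ) : Multiset ℕ) := by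
      rw [Finset.image_singleton] at hM2eq
      rw [← hM2eq, hM2z]
    obtain ⟨sa, sb, hsab, hsa, hsb⟩ := ms_split_of_map_add f2 _ _ _ hzeq
    obtain ⟨γ1, hγ1, hγ1z⟩ := ms_map_eq_ofFn z1 sa f2 hsa
    obtain ⟨γ2, hγ2, hγ2z⟩ := ms_map_eq_ofFn z2 sb f2 hsb
    have hγval : (({c2 u} : Finset (Fin m))ᶜ).val
        = ((List.ofFn γ1 ++ List.ofFn γ2 : List (Fin m)) : Multiset (Fin m)) := by
      rw [hsab, hγ1, hγ2]; rfl
    have hγnodup : (List.ofFn γ1 ++ List.ofFn γ2).Nodup := by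
      have := (({c2 u} : Finset (Fin m))ᶜ).nodup
      rw [hγval] at this
      simpa using this
    have hγ1inj : Function.Injective γ1 := List.nodup_ofFn.mp (List.nodup_append'.mp hγnodup).1
    have hγ2inj : Function.Injective γ2 := List.nodup_ofFn.mp (List.nodup_append'.mp hγnodup).2.1
    have hγdisj : ∀ t t', γ1 t ≠ γ2 t' := by
      intro t t' h
      exact (List.nodup_append'.mp hγnodup).2.2 (List.mem_ofFn.mpr ⟨t, rfl⟩)
        (List.mem_ofFn.mpr ⟨t', h.symm⟩)
    have hγmem : ∀ j : Fin m, j ∈ ({c2 u} : Finset (Fin m))ᶜ ↔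
        j ∈ List.ofFn γ1 ++ List.ofFn γ2 := by
      intro j
      rw [Finset.mem_def, hγval, Multiset.mem_coe]
    have hγ1ne : ∀ t, γ1 t ≠ c2 u := by
      intro t h
      have : γ1 t ∈ ({c2 u} : Finset (Fin m))ᶜ := (hγmem _).mpr
        (List.mem_append.mpr (Or.inl (List.mem_ofFn.mpr ⟨t, rfl⟩)))
      simp [h] at this
    have hγ2ne : ∀ t, γ2 t ≠ c2 u := by
      intro t h
      have : γ2 t ∈ ({c2 u} : Finset (Fin m))ᶜ := (hγmem _).mpr
        (List.mem_append.mpr (Or.inr (List.mem_ofFn.mpr ⟨t, rfl⟩)))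
      simp [h] at this
    -- totality source
    have htots : ∀ j : Fin m, j = c2 u ∨ (∃ t, γ1 t = j) ∨ (∃ t, γ2 t = j) := by
      intro j
      by_cases h : j = c2 u
      · exact Or.inl h
      · have : j ∈ ({c2 u} : Finset (Fin m))ᶜ := by simp [h]
        have := (hγmem j).mp this
        rcases List.mem_append.mp this with h1 | h2
        · exact Or.inr (Or.inl (by simpa using List.mem_ofFn.mp h1))
        · exact Or.inr (Or.inr (by simpa using List.mem_ofFn.mp h2))
    -- totality target
    have htott : ∀ i : Fin m, i = i0 ∨ (∃ t, α t = i) ∨ (∃ t, β t = i) := by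
      intro i
      by_cases h0 : i = i0
      · exact Or.inl h0
      by_cases h1 : i ∈ U.image c1
      · refine Or.inr (Or.inl ?_)
        have : i ∈ (U.image c1).val := h1
        rw [hα] at this
        simpa using List.mem_ofFn.mp (Multiset.mem_coe.mp this)
      · refine Or.inr (Or.inr ?_)
        have : i ∈ (U.image c1)ᶜ.erase i0 := Finset.mem_erase.mpr ⟨h0, Finset.mem_compl.mpr h1⟩
        have : i ∈ ((U.image c1)ᶜ.erase i0).val := this
        rw [hβ] at this
        simpa using List.mem_ofFn.mp (Multiset.mem_coe.mp this)
    -- target side facts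
    have hβne : ∀ t, β t ≠ i0 := fun t => (Finset.mem_erase.mp (hβmem t)).1
    have hβnim : ∀ t, β t ∉ U.image c1 :=
      fun t => Finset.mem_compl.mp (Finset.mem_of_mem_erase (hβmem t))
    -- define π
    classical
    set π : Fin m → Fin m := fun j =>
      if h1 : ∃ t, γ1 t = j then α h1.choose
      else if h2 : ∃ t, γ2 t = j then β h2.choose
      else i0 with hπdef
    have hπγ1 : ∀ t, π (γ1 t) = α t := by
      intro t
      have h1 : ∃ t', γ1 t' = γ1 t := ⟨t, rfl⟩
      rw [hπdef]
      simp only [dif_pos h1]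
      exact congrArg α (hγ1inj h1.choose_spec)
    have hπγ2 : ∀ t, π (γ2 t) = β t := by
      intro t
      have h1 : ¬ ∃ t', γ1 t' = γ2 t := fun ⟨t', h⟩ => hγdisj t' t h
      have h2 : ∃ t', γ2 t' = γ2 t := ⟨t, rfl⟩
      rw [hπdef]
      simp only [dif_neg h1, dif_pos h2]
      exact congrArg β (hγ2inj h2.choose_spec)
    have hπu : π (c2 u) = i0 := by
      have h1 : ¬ ∃ t', γ1 t' = c2 u := fun ⟨t', h⟩ => hγ1ne t' h
      have h2 : ¬ ∃ t', γ2 t' = c2 u := fun ⟨t', h⟩ => hγ2ne t' h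
      rw [hπdef]
      simp only [dif_neg h1, dif_neg h2]
    have hπinj : Function.Injective π := by
      intro j1 j2 h
      rcases htots j1 with rfl | ⟨t1, rfl⟩ | ⟨t1, rfl⟩ <;>
        rcases htots j2 with rfl | ⟨t2, rfl⟩ | ⟨t2, rfl⟩
      · rfl
      · rw [hπu, hπγ1] at h; exact absurd (h ▸ hαmem t2) hi0
      · rw [hπu, hπγ2] at h; exact absurd h.symm (hβne t2)
      · rw [hπu, hπγ1] at h; exact absurd (h ▸ hαmem t1) hi0
      · rw [hπγ1, hπγ1] at h; rw [hαinj h]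
      · rw [hπγ1, hπγ2] at h; exact absurd (h ▸ hβnim t2) (by simp [hαmem t1])
      · rw [hπu, hπγ2] at h; exact absurd h (hβne t1)
      · rw [hπγ1, hπγ2] at h; exact absurd (h ▸ hαmem t2) (by simp [hβnim t1])
      · rw [hπγ2, hπγ2] at h; rw [hβinj h]
    -- the combined coloring
    set c : V → Fin m := fun v => if v ∈ S2 then π (c2 v) else c1 v with hcdef
    have hcS1 : ∀ v ∈ S1, c v = c1 v := by
      intro v hv
      rw [hcdef]
      simp [Finset.disjoint_left.mp hdisj hv]
    have hcS2 : ∀ v ∈ S2, c v = π (c2 v) := by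
      intro v hv
      rw [hcdef]; simp [hv]
    have hfiltS1 : ∀ i : Fin m, S1.filter (fun v => c v = i) = S1.filter (fun v => c1 v = i) :=
      fun i => Finset.filter_congr (fun v hv => by rw [hcS1 v hv])
    have hfiltS2 : ∀ j : Fin m,
        S2.filter (fun v => c v = π j) = S2.filter (fun v => c2 v = j) := by
      intro j
      refine Finset.filter_congr fun v hv => ?_
      rw [hcS2 v hv]
      constructor
      · intro h; exact hπinj (by simpa using h)
      · intro h; simp [h]
    have hFsplit : ∀ i : Fin m,
        (Finset.univ.filter (fun v => c v = i)).card
          = (S1.filter (fun v => c v = i)).card + (S2.filter (fun v => c v = i)).card :=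
      fun i => filter_card_split S1 S2 hdisj hcover _
    have hF : ∀ j : Fin m,
        (Finset.univ.filter (fun v => c v = π j)).card = f1 (π j) + f2 j := by
      intro j
      rw [hFsplit, hfiltS1, hfiltS2]
    refine ⟨Finset.subset_univ _, c, ?_, ?_, ?_, ?_, ?_⟩
    · -- proper
      intro a _ b _ hadj
      rcases hEdges a b hadj with ⟨ha, hb⟩ | ⟨ha, hb⟩
      · rw [hcS1 a ha, hcS1 b hb]
        exact hprop1 a ha b hb hadj
      · rw [hcS2 a ha, hcS2 b hb]
        exact fun h => hprop2 a ha b hb hadj (hπinj h)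
    · -- sizes
      intro i
      rcases htott i with rfl | ⟨t, rfl⟩ | ⟨t, rfl⟩
      · rw [← hπu, hF, hπu, hi0l, ← hs2]
        exact hls2
      · rw [← hπγ1 t, hF, hπγ1, hαx, hγ1z]
        exact hxz t
      · rw [← hπγ2 t, hF, hπγ2, hβy, hγ2z]
        exact hyz t
    · -- injective on insert u U
      intro a ha b hb hab
      simp only [Finset.coe_insert, Set.mem_insert_iff, Finset.mem_coe] at ha hb
      have hcu' : c u = i0 := by rw [hcS2 u hu, hπu]
      rcases ha with rfl | ha <;> rcases hb with rfl | hb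
      · rfl
      · exfalso
        rw [hcu', hcS1 b (hU hb)] at hab
        exact hi0 (Finset.mem_image.mpr ⟨b, hb, hab.symm⟩)
      · exfalso
        rw [hcu', hcS1 a (hU ha)] at hab
        exact hi0 (Finset.mem_image.mpr ⟨a, ha, hab⟩)
      · rw [hcS1 a (hU ha), hcS1 b (hU hb)] at hab
        exact hinj1 (by simpa using ha) (by simpa using hb) hab
    · -- A
      have himg : (insert u U).image c = insert i0 (U.image c1) := by
        rw [Finset.image_insert]
        congr 1
        · rw [hcS2 u hu, hπu]
        · exact Finset.image_congr fun v hv => hcS1 v (hU (by simpa using hv))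
      rw [hAeq, himg, insert_val_not_mem hi0, Multiset.map_cons, hα, Multiset.map_coe,
        List.map_ofFn]
      have h1 : (Finset.univ.filter (fun v => c v = i0)).card = l + s2 := by
        rw [← hπu, hF, hπu, hi0l, hs2]
      have h2 : ((fun i => (Finset.univ.filter (fun v => c v = i)).card) ∘ α)
          = fun t => x t + z1 t := by
        funext t
        simp only [Function.comp]
        rw [← hπγ1 t, hF, hπγ1, hαx, hγ1z]
      rw [h1, h2]
      rw [add_comm ((List.ofFn fun t => x t + z1 t : List ℕ) : Multiset ℕ)]
      rfl
    · -- M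
      have himg : (insert u U).image c = insert i0 (U.image c1) := by
        rw [Finset.image_insert]
        congr 1
        · rw [hcS2 u hu, hπu]
        · exact Finset.image_congr fun v hv => hcS1 v (hU (by simpa using hv))
      rw [hMeq, himg, Finset.compl_insert, hβ, Multiset.map_coe, List.map_ofFn]
      have h2 : ((fun i => (Finset.univ.filter (fun v => c v = i)).card) ∘ β)
          = fun t => y t + z2 t := by
        funext t
        simp only [Function.comp]
        rw [← hπγ2 t, hF, hπγ2, hβy, hγ2z]
      rw [h2]
end
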